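/- A weak bialgebra A over a commutative ring k is a weak Hopf algebra (i.e. admits an antipode) if and only if there exists a (not necessarily unique) k-linear map Z : A → A such that id_A∗Z = ⊓^L and Z∗id_A = ⊓^R in the convolution algebra of k-linear endomorphisms of A. -/

import Mathlib

open TensorProduct LinearMap

section WDL

variable (R : Type*) [CommRing R]

section AlgDefs

variable {A B : Type*} [Ring A] [Ring B] [Algebra R A] [Algebra R B]

/-- Weak distributive law axioms, stated pointwise on pure tensors. -/
def IsWeakDistLaw (ψ : A ⊗[R] B →ₗ[R] B ⊗[R] A) : Prop :=
  (∀ (a a' : A) (b : B), ψ ((a * a') ⊗ₜ[R] b) =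
      lTensor B (mul' R A) ((TensorProduct.assoc R B A A)
        (rTensor A ψ ((TensorProduct.assoc R A B A).symm (a ⊗ₜ[R] ψ (a' ⊗ₜ[R] b)))))) ∧
  (∀ (a : A) (b b' : B), ψ (a ⊗ₜ[R] (b * b')) =
      rTensor A (mul' R B) ((TensorProduct.assoc R B B A).symm
        (lTensor B ψ ((TensorProduct.assoc R B A B) (ψ (a ⊗ₜ[R] b) ⊗ₜ[R] b'))))) ∧
  (∀ b : B, ψ ((1 : A) ⊗ₜ[R] b) =
      rTensor A (mul' R B) ((TensorProduct.assoc R B B A).symm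
        (b ⊗ₜ[R] ψ ((1 : A) ⊗ₜ[R] (1 : B))))) ∧
  (∀ a : A, ψ (a ⊗ₜ[R] (1 : B)) =
      lTensor B (mul' R A) ((TensorProduct.assoc R B A A)
        (ψ ((1 : A) ⊗ₜ[R] (1 : B)) ⊗ₜ[R] a)))

/-- (Strict) distributive law axioms, stated pointwise on pure tensors. -/
def IsDistLaw (ψ : A ⊗[R] B →ₗ[R] B ⊗[R] A) : Prop :=
  (∀ (a a' : A) (b : B), ψ ((a * a') ⊗ₜ[R] b) =
      lTensor B (mul' R A) ((TensorProduct.assoc R B A A)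
        (rTensor A ψ ((TensorProduct.assoc R A B A).symm (a ⊗ₜ[R] ψ (a' ⊗ₜ[R] b)))))) ∧
  (∀ (a : A) (b b' : B), ψ (a ⊗ₜ[R] (b * b')) =
      rTensor A (mul' R B) ((TensorProduct.assoc R B B A).symm
        (lTensor B ψ ((TensorProduct.assoc R B A B) (ψ (a ⊗ₜ[R] b) ⊗ₜ[R] b'))))) ∧
  (∀ b : B, ψ ((1 : A) ⊗ₜ[R] b) = b ⊗ₜ[R] (1 : A)) ∧
  (∀ a : A, ψ (a ⊗ₜ[R] (1 : B)) = (1 : B) ⊗ₜ[R] a)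

/-- `φ` is a weak inverse of `ψ`. -/
def IsWeakInverse (ψ : A ⊗[R] B →ₗ[R] B ⊗[R] A) (φ : B ⊗[R] A →ₗ[R] A ⊗[R] B) : Prop :=
  (∀ (a : A) (b : B), ψ (φ (b ⊗ₜ[R] a)) =
      rTensor A (mul' R B) ((TensorProduct.assoc R B B A).symm
        (b ⊗ₜ[R] ψ (a ⊗ₜ[R] (1 : B))))) ∧
  (∀ (a : A) (b : B), φ (ψ (a ⊗ₜ[R] b)) =
      rTensor B (mul' R A) ((TensorProduct.assoc R A A B).symm
        (a ⊗ₜ[R] φ (b ⊗ₜ[R] (1 : A)))))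

/-- The weak wreath product multiplication `(μ_B ⊗ μ_A) ∘ (id_B ⊗ ψ ⊗ id_A)`. -/
noncomputable def wreathMul (ψ : A ⊗[R] B →ₗ[R] B ⊗[R] A) :
    (B ⊗[R] A) ⊗[R] (B ⊗[R] A) →ₗ[R] B ⊗[R] A :=
  TensorProduct.map (mul' R B) (mul' R A)
    ∘ₗ (TensorProduct.assoc R B B (A ⊗[R] A)).symm.toLinearMap
    ∘ₗ lTensor B (TensorProduct.assoc R B A A).toLinearMap
    ∘ₗ lTensor B (rTensor A ψ)
    ∘ₗ lTensor B (TensorProduct.assoc R A B A).symm.toLinearMap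
    ∘ₗ (TensorProduct.assoc R B A (B ⊗[R] A)).toLinearMap

end AlgDefs

section CoalgDefs

variable {A B : Type*} [AddCommGroup A] [AddCommGroup B] [Module R A] [Module R B]

/-- Tensor product comultiplication `(id ⊗ tw ⊗ id) ∘ (dA ⊗ dB)` built from the
comultiplication data `dA`, `dB`. -/
noncomputable def comulD (dA : A →ₗ[R] A ⊗[R] A) (dB : B →ₗ[R] B ⊗[R] B) :
    A ⊗[R] B →ₗ[R] (A ⊗[R] B) ⊗[R] (A ⊗[R] B) :=
  (TensorProduct.tensorTensorTensorComm R A A B B).toLinearMap ∘ₗ TensorProduct.map dA dB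

/-- Tensor product counit `ε_A ⊗ ε_B`. -/
noncomputable def counitD (eA : A →ₗ[R] R) (eB : B →ₗ[R] R) : A ⊗[R] B →ₗ[R] R :=
  (TensorProduct.lid R R).toLinearMap ∘ₗ TensorProduct.map eA eB

/-- The weakly comonoidal conditions for a mutually weak inverse pair `(ψ, φ)`,
with respect to comultiplication/counit data on `A` and `B`. -/
def IsWeaklyComonoidalD (ψ : A ⊗[R] B →ₗ[R] B ⊗[R] A) (φ : B ⊗[R] A →ₗ[R] A ⊗[R] B)
    (dA : A →ₗ[R] A ⊗[R] A) (dB : B →ₗ[R] B ⊗[R] B)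
    (eA : A →ₗ[R] R) (eB : B →ₗ[R] R) : Prop :=
  (rTensor (B ⊗[R] A) (ψ ∘ₗ φ) ∘ₗ comulD R dB dA ∘ₗ ψ =
      TensorProduct.map ψ ψ ∘ₗ comulD R dA dB) ∧
  (lTensor (B ⊗[R] A) (ψ ∘ₗ φ) ∘ₗ comulD R dB dA ∘ₗ ψ =
      TensorProduct.map ψ ψ ∘ₗ comulD R dA dB) ∧
  (rTensor (A ⊗[R] B) (φ ∘ₗ ψ) ∘ₗ comulD R dA dB ∘ₗ φ =
      TensorProduct.map φ φ ∘ₗ comulD R dB dA) ∧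
  (lTensor (A ⊗[R] B) (φ ∘ₗ ψ) ∘ₗ comulD R dA dB ∘ₗ φ =
      TensorProduct.map φ φ ∘ₗ comulD R dB dA) ∧
  (counitD R eB eA ∘ₗ ψ = counitD R eA eB ∘ₗ φ ∘ₗ ψ)

end CoalgDefs

section ComonClass

variable {A B : Type*} [AddCommGroup A] [AddCommGroup B] [Module R A] [Module R B]
  [Coalgebra R A] [Coalgebra R B]

/-- Tensor product comultiplication on `A ⊗ B` for coalgebras `A`, `B`. -/
noncomputable def comulTP : A ⊗[R] B →ₗ[R] (A ⊗[R] B) ⊗[R] (A ⊗[R] B) :=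
  comulD R (Coalgebra.comul (R := R) (A := A)) (Coalgebra.comul (R := R) (A := B))

/-- Tensor product counit on `A ⊗ B` for coalgebras `A`, `B`. -/
noncomputable def counitTP : A ⊗[R] B →ₗ[R] R :=
  counitD R (Coalgebra.counit (R := R) (A := A)) (Coalgebra.counit (R := R) (A := B))

end ComonClass

/-- Weakly comonoidal pair with respect to given coalgebra instances. -/
def IsWeaklyComonoidal {A B : Type*} [Ring A] [Ring B] [Algebra R A] [Algebra R B]
    [Coalgebra R A] [Coalgebra R B]
    (ψ : A ⊗[R] B →ₗ[R] B ⊗[R] A) (φ : B ⊗[R] A →ₗ[R] A ⊗[R] B) : Prop :=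
  IsWeaklyComonoidalD R ψ φ (Coalgebra.comul (R := R) (A := A))
    (Coalgebra.comul (R := R) (A := B)) (Coalgebra.counit (R := R) (A := A))
    (Coalgebra.counit (R := R) (A := B))

end WDL

/-- Data of a (possibly weak) bialgebra structure on a module `M`. -/
structure WBAData (R M : Type*) [CommRing R] [AddCommGroup M] [Module R M] where
  mul : M ⊗[R] M →ₗ[R] M
  one : M
  comul : M →ₗ[R] M ⊗[R] M
  counit : M →ₗ[R] R

namespace WBAData

variable {R M : Type*} [CommRing R] [AddCommGroup M] [Module R M] (d : WBAData R M)

/-- The induced multiplication of `M ⊗ M`. -/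
noncomputable def mul2 : (M ⊗[R] M) ⊗[R] (M ⊗[R] M) →ₗ[R] M ⊗[R] M :=
  TensorProduct.map d.mul d.mul ∘ₗ (TensorProduct.tensorTensorTensorComm R M M M M).toLinearMap

/-- The induced multiplication of `(M ⊗ M) ⊗ M`. -/
noncomputable def mul3 :
    ((M ⊗[R] M) ⊗[R] M) ⊗[R] ((M ⊗[R] M) ⊗[R] M) →ₗ[R] (M ⊗[R] M) ⊗[R] M :=
  TensorProduct.map d.mul2 d.mul ∘ₗ
    (TensorProduct.tensorTensorTensorComm R (M ⊗[R] M) M (M ⊗[R] M) M).toLinearMap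

/-- Left multiplication by `a`. -/
noncomputable def lmul (a : M) : M →ₗ[R] M := d.mul ∘ₗ TensorProduct.mk R M M a

/-- Right multiplication by `c`. -/
noncomputable def rmul (c : M) : M →ₗ[R] M := d.mul ∘ₗ (TensorProduct.mk R M M).flip c

/-- Convolution product of endomorphisms. -/
noncomputable def conv (f g : M →ₗ[R] M) : M →ₗ[R] M :=
  d.mul ∘ₗ TensorProduct.map f g ∘ₗ d.comul

/-- The projection `⊓^L : a ↦ ε(1₁a)1₂`. -/
noncomputable def piL : M →ₗ[R] M :=
  (TensorProduct.lid R M).toLinearMap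
    ∘ₗ rTensor M (d.counit ∘ₗ d.mul ∘ₗ (TensorProduct.comm R M M).toLinearMap)
    ∘ₗ (TensorProduct.assoc R M M M).symm.toLinearMap
    ∘ₗ (TensorProduct.mk R M (M ⊗[R] M)).flip (d.comul d.one)

/-- The projection `⊓^R : a ↦ 1₁ε(a1₂)`. -/
noncomputable def piR : M →ₗ[R] M :=
  (TensorProduct.rid R M).toLinearMap
    ∘ₗ lTensor M (d.counit ∘ₗ d.mul ∘ₗ (TensorProduct.comm R M M).toLinearMap)
    ∘ₗ (TensorProduct.assoc R M M M).toLinearMap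
    ∘ₗ TensorProduct.mk R (M ⊗[R] M) M (d.comul d.one)

/-- The axioms of a weak bialgebra on the data `d`. -/
structure IsWeakBialgebra : Prop where
  mul_assoc : d.mul ∘ₗ rTensor M d.mul =
      d.mul ∘ₗ lTensor M d.mul ∘ₗ (TensorProduct.assoc R M M M).toLinearMap
  one_mul : ∀ x : M, d.mul (d.one ⊗ₜ[R] x) = x
  mul_one : ∀ x : M, d.mul (x ⊗ₜ[R] d.one) = x
  coassoc : (TensorProduct.assoc R M M M).toLinearMap ∘ₗ rTensor M d.comul ∘ₗ d.comul
      = lTensor M d.comul ∘ₗ d.comul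
  counit_left : ∀ x : M, (TensorProduct.lid R M) (rTensor M d.counit (d.comul x)) = x
  counit_right : ∀ x : M, (TensorProduct.rid R M) (lTensor M d.counit (d.comul x)) = x
  comul_mul : d.comul ∘ₗ d.mul = d.mul2 ∘ₗ TensorProduct.map d.comul d.comul
  delta_one_left : d.mul3 ((d.comul d.one ⊗ₜ[R] d.one) ⊗ₜ[R]
      ((TensorProduct.assoc R M M M).symm (d.one ⊗ₜ[R] d.comul d.one)))
      = rTensor M d.comul (d.comul d.one)
  delta_one_right : d.mul3 (((TensorProduct.assoc R M M M).symm
      (d.one ⊗ₜ[R] d.comul d.one)) ⊗ₜ[R] (d.comul d.one ⊗ₜ[R] d.one))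
      = rTensor M d.comul (d.comul d.one)
  counit_mul_left : ∀ a b c : M, (TensorProduct.lid R R) (TensorProduct.map
      (d.counit ∘ₗ d.lmul a) (d.counit ∘ₗ d.rmul c) (d.comul b))
      = d.counit (d.mul (d.mul (a ⊗ₜ[R] b) ⊗ₜ[R] c))
  counit_mul_right : ∀ a b c : M, (TensorProduct.lid R R) (TensorProduct.map
      (d.counit ∘ₗ d.rmul c) (d.counit ∘ₗ d.lmul a) (d.comul b))
      = d.counit (d.mul (d.mul (a ⊗ₜ[R] b) ⊗ₜ[R] c))

/-- The axioms of a (genuine) bialgebra on the data `d`. -/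
structure IsBialgebra : Prop where
  mul_assoc : d.mul ∘ₗ rTensor M d.mul =
      d.mul ∘ₗ lTensor M d.mul ∘ₗ (TensorProduct.assoc R M M M).toLinearMap
  one_mul : ∀ x : M, d.mul (d.one ⊗ₜ[R] x) = x
  mul_one : ∀ x : M, d.mul (x ⊗ₜ[R] d.one) = x
  coassoc : (TensorProduct.assoc R M M M).toLinearMap ∘ₗ rTensor M d.comul ∘ₗ d.comul
      = lTensor M d.comul ∘ₗ d.comul
  counit_left : ∀ x : M, (TensorProduct.lid R M) (rTensor M d.counit (d.comul x)) = x
  counit_right : ∀ x : M, (TensorProduct.rid R M) (lTensor M d.counit (d.comul x)) = x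
  comul_mul : d.comul ∘ₗ d.mul = d.mul2 ∘ₗ TensorProduct.map d.comul d.comul
  comul_one : d.comul d.one = d.one ⊗ₜ[R] d.one
  counit_one : d.counit d.one = 1
  counit_mul : ∀ x y : M, d.counit (d.mul (x ⊗ₜ[R] y)) = d.counit x * d.counit y

/-- `S` is an antipode for the data `d`. -/
def IsAntipode (S : M →ₗ[R] M) : Prop :=
  d.conv LinearMap.id S = d.piL ∧ d.conv S LinearMap.id = d.piR ∧
    d.conv (d.conv S LinearMap.id) S = S

end WBAData

/-- The canonical weak-bialgebra data attached to an algebra-and-coalgebra `H`. -/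
noncomputable def algWBA (R H : Type*) [CommRing R] [Ring H] [Algebra R H] [Coalgebra R H] :
    WBAData R H :=
  { mul := LinearMap.mul' R H
    one := 1
    comul := Coalgebra.comul
    counit := Coalgebra.counit }

section Helpers

open Coalgebra

variable {R H : Type*} [CommRing R] [Ring H] [Algebra R H] [Coalgebra R H]

private lemma assoc_nat (f g k : H →ₗ[R] H) :
    (TensorProduct.assoc R H H H).toLinearMap ∘ₗ
      TensorProduct.map (TensorProduct.map f g) k =
    TensorProduct.map f (TensorProduct.map g k) ∘ₗ
      (TensorProduct.assoc R H H H).toLinearMap := by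
  apply TensorProduct.ext_threefold
  intro x y z
  simp

private lemma map_conv_left (f g k : H →ₗ[R] H) :
    TensorProduct.map ((algWBA R H).conv f g) k
      = rTensor H (algWBA R H).mul ∘ₗ TensorProduct.map (TensorProduct.map f g) k
        ∘ₗ rTensor H (algWBA R H).comul := by
  rw [rTensor, rTensor, ← TensorProduct.map_comp, ← TensorProduct.map_comp]
  simp [WBAData.conv]

private lemma map_conv_right (f g k : H →ₗ[R] H) :
    TensorProduct.map f ((algWBA R H).conv g k)
      = lTensor H (algWBA R H).mul ∘ₗ TensorProduct.map f (TensorProduct.map g k)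
        ∘ₗ lTensor H (algWBA R H).comul := by
  rw [lTensor, lTensor, ← TensorProduct.map_comp, ← TensorProduct.map_comp]
  simp [WBAData.conv]

private lemma conv_assoc (h : (algWBA R H).IsWeakBialgebra) (f g k : H →ₗ[R] H) :
    (algWBA R H).conv ((algWBA R H).conv f g) k
      = (algWBA R H).conv f ((algWBA R H).conv g k) := by
  set d := algWBA R H with hd
  ext a
  have e1 := LinearMap.congr_fun (map_conv_left f g k) (d.comul a)
  have e2 := LinearMap.congr_fun (map_conv_right f g k) (d.comul a)
  have hm := LinearMap.congr_fun h.mul_assoc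
    (TensorProduct.map (TensorProduct.map f g) k ((rTensor H d.comul) (d.comul a)))
  have hn := LinearMap.congr_fun (assoc_nat f g k) ((rTensor H d.comul) (d.comul a))
  have hc := LinearMap.congr_fun h.coassoc a
  simp only [comp_apply, LinearEquiv.coe_coe, WBAData.conv, ← hd] at e1 e2 hm hn hc
  simp only [WBAData.conv, comp_apply, e1, e2, hm, hn, hc]

private lemma conv_apply (f g : H →ₗ[R] H) (a : H) (ra : Coalgebra.Repr R a (H × H)) :
    (algWBA R H).conv f g a = ∑ j ∈ ra.index, f (ra.left j) * g (ra.right j) := by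
  simp only [WBAData.conv, algWBA, comp_apply]
  rw [show Coalgebra.comul a = ∑ j ∈ ra.index, ra.left j ⊗ₜ[R] ra.right j from ra.eq.symm]
  simp

private lemma piL_apply (a : H) (r : Coalgebra.Repr R (1 : H) (H × H)) :
    (algWBA R H).piL a
      = ∑ i ∈ r.index, Coalgebra.counit (R := R) (r.left i * a) • r.right i := by
  simp only [WBAData.piL, algWBA, comp_apply, LinearEquiv.coe_coe, flip_apply,
    TensorProduct.mk_apply]
  rw [show Coalgebra.comul (R := R) (1 : H) = ∑ i ∈ r.index, r.left i ⊗ₜ[R] r.right i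
    from r.eq.symm]
  simp [TensorProduct.tmul_sum, TensorProduct.sum_tmul]

private lemma piR_apply (a : H) (r : Coalgebra.Repr R (1 : H) (H × H)) :
    (algWBA R H).piR a
      = ∑ i ∈ r.index, Coalgebra.counit (R := R) (a * r.right i) • r.left i := by
  simp only [WBAData.piR, algWBA, comp_apply, LinearEquiv.coe_coe, TensorProduct.mk_apply]
  rw [show Coalgebra.comul (R := R) (1 : H) = ∑ i ∈ r.index, r.left i ⊗ₜ[R] r.right i
    from r.eq.symm]
  simp [TensorProduct.tmul_sum, TensorProduct.sum_tmul]

private lemma comul_one_mul (h : (algWBA R H).IsWeakBialgebra) (a : H)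
    (r : Coalgebra.Repr R (1 : H) (H × H)) (ra : Coalgebra.Repr R a (H × H)) :
    Coalgebra.comul (R := R) a = ∑ i ∈ r.index, ∑ j ∈ ra.index,
      (r.left i * ra.left j) ⊗ₜ[R] (r.right i * ra.right j) := by
  have := LinearMap.congr_fun h.comul_mul ((1 : H) ⊗ₜ[R] a)
  simp only [comp_apply, algWBA, TensorProduct.map_tmul, mul'_apply, one_mul] at this
  rw [this, WBAData.mul2]
  rw [show Coalgebra.comul (R := R) (1 : H) = ∑ i ∈ r.index, r.left i ⊗ₜ[R] r.right i
    from r.eq.symm,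
    show Coalgebra.comul (R := R) a = ∑ j ∈ ra.index, ra.left j ⊗ₜ[R] ra.right j
    from ra.eq.symm]
  simp [TensorProduct.tmul_sum, TensorProduct.sum_tmul, algWBA]
  rw [Finset.sum_comm]

private lemma comul_mul_one (h : (algWBA R H).IsWeakBialgebra) (a : H)
    (r : Coalgebra.Repr R (1 : H) (H × H)) (ra : Coalgebra.Repr R a (H × H)) :
    Coalgebra.comul (R := R) a = ∑ j ∈ ra.index, ∑ i ∈ r.index,
      (ra.left j * r.left i) ⊗ₜ[R] (ra.right j * r.right i) := by
  have := LinearMap.congr_fun h.comul_mul (a ⊗ₜ[R] (1 : H))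
  simp only [comp_apply, algWBA, TensorProduct.map_tmul, mul'_apply, mul_one] at this
  rw [this, WBAData.mul2]
  rw [show Coalgebra.comul (R := R) (1 : H) = ∑ i ∈ r.index, r.left i ⊗ₜ[R] r.right i
    from r.eq.symm,
    show Coalgebra.comul (R := R) a = ∑ j ∈ ra.index, ra.left j ⊗ₜ[R] ra.right j
    from ra.eq.symm]
  simp [TensorProduct.tmul_sum, TensorProduct.sum_tmul, algWBA]
  rw [Finset.sum_comm]

private lemma conv_piL_id (h : (algWBA R H).IsWeakBialgebra) :
    (algWBA R H).conv (algWBA R H).piL LinearMap.id = LinearMap.id := by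
  ext a
  obtain r := Coalgebra.Repr.arbitrary R (1 : H)
  obtain ra := Coalgebra.Repr.arbitrary R a
  have key := h.counit_left a
  simp only [algWBA] at key
  rw [comul_one_mul h a r ra] at key
  simp only [map_sum, rTensor_tmul, TensorProduct.lid_tmul, algWBA] at key
  rw [conv_apply _ _ a ra]
  simp only [id_coe, id_eq]
  calc ∑ j ∈ ra.index, (algWBA R H).piL (ra.left j) * ra.right j
      = ∑ j ∈ ra.index, ∑ i ∈ r.index,
          Coalgebra.counit (R := R) (r.left i * ra.left j) • (r.right i * ra.right j) := by
        refine Finset.sum_congr rfl fun j _ => ?_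
        rw [piL_apply _ r, Finset.sum_mul]
        exact Finset.sum_congr rfl fun i _ => smul_mul_assoc _ _ _
    _ = a := by rw [Finset.sum_comm]; exact key

private lemma conv_id_piR (h : (algWBA R H).IsWeakBialgebra) :
    (algWBA R H).conv LinearMap.id (algWBA R H).piR = LinearMap.id := by
  ext a
  obtain r := Coalgebra.Repr.arbitrary R (1 : H)
  obtain ra := Coalgebra.Repr.arbitrary R a
  have key := h.counit_right a
  simp only [algWBA] at key
  rw [comul_mul_one h a r ra] at key
  simp only [map_sum, lTensor_tmul, TensorProduct.rid_tmul, algWBA] at key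
  rw [conv_apply _ _ a ra]
  simp only [id_coe, id_eq]
  calc ∑ j ∈ ra.index, ra.left j * (algWBA R H).piR (ra.right j)
      = ∑ j ∈ ra.index, ∑ i ∈ r.index,
          Coalgebra.counit (R := R) (ra.right j * r.right i) • (ra.left j * r.left i) := by
        refine Finset.sum_congr rfl fun j _ => ?_
        rw [piR_apply _ r, Finset.mul_sum]
        exact Finset.sum_congr rfl fun i _ => mul_smul_comm _ _ _
    _ = a := key

end Helpers

/-- a weak bialgebra is a weak Hopf algebra iff there is `Z` with
`id ∗ Z = ⊓^L` and `Z ∗ id = ⊓^R`. -/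
theorem weak_hopf_iff_exists_Z
    {R H : Type*} [CommRing R] [Ring H] [Algebra R H] [Coalgebra R H]
    (h : (algWBA R H).IsWeakBialgebra) :
    (∃ S : H →ₗ[R] H, (algWBA R H).IsAntipode S) ↔
    (∃ Z : H →ₗ[R] H,
      (algWBA R H).conv LinearMap.id Z = (algWBA R H).piL ∧
      (algWBA R H).conv Z LinearMap.id = (algWBA R H).piR) := by
  constructor
  · rintro ⟨S, hS1, hS2, -⟩
    exact ⟨S, hS1, hS2⟩
  · rintro ⟨Z, hZ1, hZ2⟩
    set d := algWBA R H with hd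
    set S := d.conv Z d.piL with hSdef
    have hS' : S = d.conv d.piR Z := by
      rw [hSdef, ← hZ1, ← hZ2, conv_assoc h]
    have h1 : d.conv LinearMap.id S = d.piL := by
      rw [hS', ← conv_assoc h, conv_id_piR h, hZ1]
    have h2 : d.conv S LinearMap.id = d.piR := by
      rw [hSdef, conv_assoc h, conv_piL_id h, hZ2]
    refine ⟨S, h1, h2, ?_⟩
    rw [h2, ← hZ2, conv_assoc h, h1, hSdef]
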